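/- Let 𝒢=(V,E) be a temporal graph, R=(v_1,…,v_k) a route in 𝒢, and x,δ∈ℕ, and let A be the dynamic-programming table defined by A_{R_1}[y]=0 and A_{R_i}[y] = max_{0≤y'≤y} arrival(v_{i−1}, v_i, A_{R_{i−1}}[y'], y−y'). Then R is x-traversal-delay-robust if and only if A_R[x] < ∞. -/

import Mathlib

/-- A time arc of a temporal graph: start vertex, end vertex, time label, traversal time. -/
structure TimeArc (V : Type) where
  src : V
  dst : V
  time : ℕ
  trav : ℕ
deriving DecidableEq

variable {V : Type}

/-- `P` is a `D`-traversal-delayed temporal walk in the temporal graph with time-arc set `E`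
(with delay time `δ`). -/
def IsTDWalk [DecidableEq V] (E D : Finset (TimeArc V)) (δ : ℕ)
    (P : List (TimeArc V)) : Prop :=
  (∀ e ∈ P, e ∈ E) ∧
  P.Chain' (fun e f => f.src = e.dst ∧
    e.time + e.trav + (if e ∈ D then δ else 0) ≤ f.time)

/-- `P` is a `D`-starting-delayed temporal walk in the temporal graph with time-arc set `E`
(with delay time `δ`). -/
def IsSDWalk [DecidableEq V] (E D : Finset (TimeArc V)) (δ : ℕ)
    (P : List (TimeArc V)) : Prop :=
  (∀ e ∈ P, e ∈ E) ∧
  P.Chain' (fun e f => f.src = e.dst ∧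
    e.time + e.trav + (if e ∈ D then δ else 0) ≤ f.time + (if f ∈ D then δ else 0))

/-- The sequence of vertices visited by a walk: the start vertex of its first arc followed by
the end vertices of all its arcs. -/
def visits : List (TimeArc V) → List V
  | [] => []
  | e :: es => e.src :: (e :: es).map TimeArc.dst

/-- The walk `P` follows the route `R`: the visited vertex sequence of `P` equals `R`
(the empty walk follows every single-vertex route). -/
def Follows (P : List (TimeArc V)) (R : List V) : Prop :=
  match P with
  | [] => ∃ v, R = [v]
  | e :: es => visits (e :: es) = R

/-- `R` is a `D`-traversal-delayed route: some `D`-traversal-delayed temporal walk follows `R`. -/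
def IsTDRoute [DecidableEq V] (E D : Finset (TimeArc V)) (δ : ℕ) (R : List V) : Prop :=
  ∃ P : List (TimeArc V), IsTDWalk E D δ P ∧ Follows P R

/-- `R` is a `D`-starting-delayed route: some `D`-starting-delayed temporal walk follows `R`. -/
def IsSDRoute [DecidableEq V] (E D : Finset (TimeArc V)) (δ : ℕ) (R : List V) : Prop :=
  ∃ P : List (TimeArc V), IsSDWalk E D δ P ∧ Follows P R

/-- `R` is `x`-traversal-delay-robust: it is a `D`-traversal-delayed route for every
`D ⊆ E` with `|D| ≤ x`. -/
def TDRobust [DecidableEq V] (E : Finset (TimeArc V)) (δ x : ℕ) (R : List V) : Prop :=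
  ∀ D : Finset (TimeArc V), D ⊆ E → D.card ≤ x → IsTDRoute E D δ R

/-- `R` is `x`-starting-delay-robust: it is a `D`-starting-delayed route for every
`D ⊆ E` with `|D| ≤ x`. -/
def SDRobust [DecidableEq V] (E : Finset (TimeArc V)) (δ x : ℕ) (R : List V) : Prop :=
  ∀ D : Finset (TimeArc V), D ⊆ E → D.card ≤ x → IsSDRoute E D δ R

/-- The function `arrival(v, w, t, y)`: worst-case single-step delayed arrival time from `v`
to `w` when starting at time `t` with up to `y` delays. It is `∞` if `t = ∞` or
`E(v,w,t) = ∅`; otherwise it equals `min (t(a₁)+λ(a₁)+δ) (t(a_{y+1})+λ(a_{y+1}))` where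
`a₁, …, a_ℓ` lists `E(v,w,t)` in nondecreasing order of arrival time, the second term being
omitted if `ℓ ≤ y`. -/
noncomputable def arrivalFn [DecidableEq V] (E : Finset (TimeArc V)) (δ : ℕ) (v w : V)
    (t : ℕ∞) (y : ℕ) : ℕ∞ :=
  if t = ⊤ then ⊤
  else
    let t0 : ℕ := WithTop.untopD 0 t
    let S : List ℕ :=
      ((E.filter (fun a => a.src = v ∧ a.dst = w ∧ t0 ≤ a.time)).val.map
        (fun a => a.time + a.trav)).sort (· ≤ ·)
    match S, S[y]? with
    | [], _ => ⊤
    | a :: _, some b => min ((a + δ : ℕ) : ℕ∞) ((b : ℕ) : ℕ∞)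
    | a :: _, none => ((a + δ : ℕ) : ℕ∞)

/-- The dynamic-programming table, computed on the *reversed* route:
`dpRev E δ (Rⱼ.reverse) y` is the table entry `A_{Rⱼ}[y]`; the base case is
`A_{R₁}[y] = 0` and `A_{Rᵢ}[y] = max_{0 ≤ y' ≤ y} arrival(v_{i-1}, v_i, A_{R_{i-1}}[y'], y - y')`. -/
noncomputable def dpRev [DecidableEq V] (E : Finset (TimeArc V)) (δ : ℕ) : List V → ℕ → ℕ∞
  | [], _ => 0
  | [_], _ => 0
  | w :: v :: rest, y =>
      (Finset.range (y + 1)).sup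
        (fun y' => arrivalFn E δ v w (dpRev E δ (v :: rest) y') (y - y'))

section Helpers

variable [DecidableEq V]

def arrKey (e : TimeArc V) : ℕ := e.time + e.trav

def dWin [DecidableEq V] (E : Finset (TimeArc V)) (v w : V) (t0 : ℕ) : Finset (TimeArc V) :=
  E.filter (fun a => a.src = v ∧ a.dst = w ∧ t0 ≤ a.time)

noncomputable def dList [DecidableEq V] (E : Finset (TimeArc V)) (v w : V) (t0 : ℕ) :
    List (TimeArc V) :=
  (dWin E v w t0).toList.mergeSort (fun e f => decide (arrKey e ≤ arrKey f))

variable [DecidableEq V] {E : Finset (TimeArc V)} {v w : V} {t0 : ℕ}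

lemma dList_perm : (dList E v w t0).Perm (dWin E v w t0).toList :=
  List.mergeSort_perm _ _

lemma mem_dList {e : TimeArc V} : e ∈ dList E v w t0 ↔ e ∈ dWin E v w t0 := by
  rw [dList_perm.mem_iff, Finset.mem_toList]

lemma dList_nodup : (dList E v w t0).Nodup :=
  dList_perm.nodup_iff.2 (Finset.nodup_toList _)

lemma dList_sorted : ((dList E v w t0).map arrKey).Pairwise (· ≤ ·) := by
  apply List.Pairwise.map
  · exact fun a b h => h
  · have := List.pairwise_mergeSort (le := fun e f : TimeArc V => decide (arrKey e ≤ arrKey f))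
      (fun a b c hab hbc => by simp_all; omega)
      (fun a b => by simp [Nat.le_total])
      (dWin E v w t0).toList
    exact this.imp (fun h => by simpa using h)

lemma dList_map_eq :
    (((dWin E v w t0).val.map arrKey).sort (· ≤ ·)) = (dList E v w t0).map arrKey := by
  refine (fun h1 h2 h3 => List.Perm.eq_of_pairwise' (r := (· ≤ · : ℕ → ℕ → Prop)) h2 h3 h1) ?_ ?_ ?_
  · have h1 : (((dWin E v w t0).val.map arrKey).sort (· ≤ ·) : Multiset ℕ)
        = (dWin E v w t0).val.map arrKey := Multiset.sort_eq _ _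
    have h2 : ((dList E v w t0).map arrKey : Multiset ℕ)
        = (dWin E v w t0).val.map arrKey := by
      have : (dList E v w t0 : Multiset (TimeArc V)) = ((dWin E v w t0).toList : Multiset (TimeArc V)) :=
        Multiset.coe_eq_coe.2 (dList_perm (E := E) (v := v) (w := w) (t0 := t0))
      calc ((dList E v w t0).map arrKey : Multiset ℕ)
          = Multiset.map arrKey (dList E v w t0 : Multiset (TimeArc V)) := by
            simp
        _ = Multiset.map arrKey ((dWin E v w t0).toList : Multiset (TimeArc V)) := by rw [this]
        _ = (dWin E v w t0).val.map arrKey := by simp [Finset.toList]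
    exact Multiset.coe_eq_coe.1 (h1.trans h2.symm)
  · exact Multiset.pairwise_sort _ _
  · exact dList_sorted

lemma arrivalFn_coe (δ : ℕ) (y : ℕ) :
    arrivalFn E δ v w (t0 : ℕ∞) y =
      match (dList E v w t0).map arrKey with
      | [] => ⊤
      | a :: l => min ((a + δ : ℕ) : ℕ∞) ((((a :: l)[y]?.getD (a + δ) : ℕ)) : ℕ∞) := by
  rw [arrivalFn, if_neg (show ¬((t0:ℕ∞) = ⊤) by simp), show (WithTop.untopD 0 (t0 : ℕ∞)) = t0 from rfl]
  dsimp only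
  rw [show (E.filter (fun a => a.src = v ∧ a.dst = w ∧ t0 ≤ a.time)) = dWin E v w t0 from rfl]
  rw [show (fun a : TimeArc V => a.time + a.trav) = arrKey from rfl]
  rw [dList_map_eq]
  cases h : (dList E v w t0).map arrKey with
  | nil => rfl
  | cons a l =>
    cases h2 : (a :: l)[y]? with
    | none => simp [h2]
    | some b => simp [h2]

lemma arrivalFn_top (δ : ℕ) (y : ℕ) : arrivalFn E δ v w ⊤ y = ⊤ := by
  rw [arrivalFn]; simp

lemma dList_eq_nil_iff : dList E v w t0 = [] ↔ dWin E v w t0 = ∅ := by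
  constructor
  · intro h
    ext e
    simp only [Finset.notMem_empty, iff_false]
    intro he
    have := mem_dList.2 he
    simp [h] at this
  · intro h
    cases hL : dList E v w t0 with
    | nil => rfl
    | cons a l =>
      have : a ∈ dWin E v w t0 := mem_dList.1 (by simp [hL])
      simp [h] at this

lemma arrivalFn_eq_top_iff (δ : ℕ) (y : ℕ) :
    arrivalFn E δ v w (t0 : ℕ∞) y = ⊤ ↔ dWin E v w t0 = ∅ := by
  rw [arrivalFn_coe]
  cases hL : dList E v w t0 with
  | nil => simp [dList_eq_nil_iff.1 hL]
  | cons a l =>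
    simp only [List.map_cons]
    constructor
    · intro h
      simp [min_eq_top] at h
    · intro h
      exfalso
      have : a ∈ dWin E v w t0 := mem_dList.1 (by simp [hL])
      simp [h] at this

lemma sorted_arrKey_le {i j : ℕ} (hij : i ≤ j) (hj : j < (dList E v w t0).length) :
    arrKey ((dList E v w t0)[i]'(lt_of_le_of_lt hij hj)) ≤ arrKey ((dList E v w t0)[j]'hj) := by
  have := (dList_sorted (E := E) (v := v) (w := w) (t0 := t0)).rel_get_of_le
    (a := ⟨i, by simpa using lt_of_le_of_lt hij hj⟩) (b := ⟨j, by simpa using hj⟩) hij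
  simpa [List.get_eq_getElem, List.getElem_map] using this

lemma head_arrKey_le {e1 e : TimeArc V} {l : List (TimeArc V)}
    (hL : dList E v w t0 = e1 :: l) (he : e ∈ dWin E v w t0) : arrKey e1 ≤ arrKey e := by
  obtain ⟨j, hj, rfl⟩ := List.mem_iff_getElem.1 (mem_dList.2 he)
  have h0 : (dList E v w t0)[0]'(by simp [hL]) = e1 := by simp [hL]
  calc arrKey e1 = arrKey ((dList E v w t0)[0]'(by simp [hL])) := by rw [h0]
    _ ≤ _ := sorted_arrKey_le (Nat.zero_le _) hj

lemma arrivalFn_le_delay {e : TimeArc V} (δ y : ℕ) (he : e ∈ dWin E v w t0) :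
    arrivalFn E δ v w (t0 : ℕ∞) y ≤ ((arrKey e + δ : ℕ) : ℕ∞) := by
  rw [arrivalFn_coe]
  cases hL : dList E v w t0 with
  | nil => exact absurd he (by simp [dList_eq_nil_iff.1 hL])
  | cons a l =>
    simp only [List.map_cons]
    refine le_trans (min_le_left _ _) ?_
    exact_mod_cast Nat.add_le_add_right (head_arrKey_le hL he) δ

lemma arrivalFn_le_undelayed {e : TimeArc V} (δ z : ℕ) (he : e ∈ dWin E v w t0)
    (hz : e ∉ (dList E v w t0).take z) :
    arrivalFn E δ v w (t0 : ℕ∞) z ≤ ((arrKey e : ℕ) : ℕ∞) := by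
  obtain ⟨j, hj, rfl⟩ := List.mem_iff_getElem.1 (mem_dList.2 he)
  have hzj : z ≤ j := by
    by_contra hc
    push_neg at hc
    exact hz (List.mem_take_iff_getElem.2 ⟨j, by simp [hc, hj], rfl⟩)
  have hzlen : z < (dList E v w t0).length := lt_of_le_of_lt hzj hj
  have hkey : arrKey ((dList E v w t0)[z]'hzlen) ≤ arrKey ((dList E v w t0)[j]'hj) :=
    sorted_arrKey_le hzj hj
  have hsome : (List.map arrKey (dList E v w t0))[z]?
      = some (arrKey ((dList E v w t0)[z]'hzlen)) := by
    rw [List.getElem?_eq_getElem (by simpa using hzlen), List.getElem_map]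
  rw [arrivalFn_coe]
  cases hM : List.map arrKey (dList E v w t0) with
  | nil =>
    exfalso
    rw [List.map_eq_nil_iff] at hM
    simp [hM] at hzlen
  | cons a l =>
    dsimp only
    rw [← hM, hsome]
    refine le_trans (min_le_right _ _) ?_
    exact_mod_cast hkey

lemma le_arrivalFn {t' : ℕ} (δ z : ℕ)
    (h1 : ∀ e ∈ dWin E v w t0, t' ≤ arrKey e + δ)
    (h2 : ∀ hz : z < (dList E v w t0).length, t' ≤ arrKey ((dList E v w t0)[z]'hz)) :
    ((t' : ℕ) : ℕ∞) ≤ arrivalFn E δ v w (t0 : ℕ∞) z := by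
  rw [arrivalFn_coe]
  cases hM : List.map arrKey (dList E v w t0) with
  | nil => exact le_top
  | cons a l =>
    have hlen0 : 0 < (dList E v w t0).length := by
      have := congrArg List.length hM
      simp at this
      omega
    have ha : arrKey ((dList E v w t0)[0]'hlen0) = a := by
      have h0 : (List.map arrKey (dList E v w t0))[0]'(by simpa using hlen0) = a := by
        simp [hM]
      rw [List.getElem_map] at h0
      exact h0
    have hmem0 : (dList E v w t0)[0]'hlen0 ∈ dWin E v w t0 :=
      mem_dList.1 (List.getElem_mem hlen0)
    have hfst : ((t' : ℕ) : ℕ∞) ≤ ((a + δ : ℕ) : ℕ∞) := by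
      exact_mod_cast ha ▸ h1 _ hmem0
    refine le_min hfst ?_
    rw [← hM]
    by_cases hzlen : z < (dList E v w t0).length
    · rw [List.getElem?_eq_getElem (by simpa using hzlen)]
      simp only [Option.getD_some, List.getElem_map]
      exact_mod_cast h2 hzlen
    · rw [List.getElem?_eq_none (by simpa using le_of_not_gt hzlen)]
      simp only [Option.getD_none]
      exact hfst

lemma arrivalFn_mono_y {t : ℕ∞} {y y' : ℕ} (δ : ℕ) (h : y ≤ y') :
    arrivalFn E δ v w t y ≤ arrivalFn E δ v w t y' := by
  induction t with
  | top => rw [arrivalFn_top, arrivalFn_top]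
  | coe t0 =>
    rw [arrivalFn_coe, arrivalFn_coe]
    cases hM : List.map arrKey (dList E v w t0) with
    | nil => exact le_refl _
    | cons a l =>
      have hsort : (a :: l).Pairwise (· ≤ ·) := hM ▸ dList_sorted
      dsimp only
      by_cases hy' : y' < (a :: l).length
      · have hy : y < (a :: l).length := lt_of_le_of_lt h hy'
        rw [List.getElem?_eq_getElem hy, List.getElem?_eq_getElem hy']
        simp only [Option.getD_some]
        refine min_le_min (le_refl _) ?_
        have := hsort.rel_get_of_le (a := ⟨y, hy⟩) (b := ⟨y', hy'⟩) h
        exact_mod_cast this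
      · rw [List.getElem?_eq_none (le_of_not_gt hy')]
        simp only [Option.getD_none]
        exact le_trans (min_le_left _ _) (by simp)

/-- actual (delayed) arrival time of the last arc of a walk (0 for the empty walk) -/
def arrOf (D : Finset (TimeArc V)) (δ : ℕ) (P : List (TimeArc V)) : ℕ :=
  match P.getLast? with
  | none => 0
  | some e => e.time + e.trav + (if e ∈ D then δ else 0)

variable {D D₀ : Finset (TimeArc V)} {δ y : ℕ} {P P₀ : List (TimeArc V)} {e : TimeArc V}

lemma arrOf_nil : arrOf D δ ([] : List (TimeArc V)) = 0 := rfl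

lemma arrOf_append :
    arrOf D δ (P ++ [e]) = e.time + e.trav + (if e ∈ D then δ else 0) := by
  simp [arrOf, List.getLast?_append]

lemma isTDWalk_nil : IsTDWalk E D δ ([] : List (TimeArc V)) := ⟨by simp, by simp [List.Chain']⟩

lemma isTDWalk_append (hP : IsTDWalk E D δ P) (heE : e ∈ E)
    (hsrc : ∀ f ∈ P.getLast?, e.src = f.dst) (htime : arrOf D δ P ≤ e.time) :
    IsTDWalk E D δ (P ++ [e]) := by
  refine ⟨fun f hf => ?_, ?_⟩
  · rcases List.mem_append.1 hf with h | h
    · exact hP.1 f h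
    · simp at h; subst h; exact heE
  · rw [List.Chain', List.isChain_append]
    refine ⟨hP.2, List.isChain_singleton _, ?_⟩
    intro f hf g hg
    simp only [List.head?_cons, Option.mem_some_iff] at hg
    subst hg
    refine ⟨hsrc f hf, ?_⟩
    rw [Option.mem_def] at hf
    have : arrOf D δ P = f.time + f.trav + (if f ∈ D then δ else 0) := by
      simp [arrOf, hf]
    omega

lemma isTDWalk_of_append (h : IsTDWalk E D δ (P₀ ++ [e])) :
    IsTDWalk E D δ P₀ ∧ e ∈ E ∧ arrOf D δ P₀ ≤ e.time ∧
      (∀ f ∈ P₀.getLast?, e.src = f.dst) := by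
  obtain ⟨hE, hch⟩ := h
  rw [List.Chain', List.isChain_append] at hch
  obtain ⟨h1, _, h3⟩ := hch
  refine ⟨⟨fun f hf => hE f (List.mem_append.2 (Or.inl hf)), h1⟩,
    hE e (by simp), ?_, fun f hf => (h3 f hf e (by simp)).1⟩
  cases hf : P₀.getLast? with
  | none => simp [arrOf, hf]
  | some f =>
    have := (h3 f hf e (by simp)).2
    simp [arrOf, hf]
    omega

lemma isTDWalk_anti (hsub : D₀ ⊆ D) (h : IsTDWalk E D δ P) : IsTDWalk E D₀ δ P := by
  refine ⟨h.1, h.2.imp ?_⟩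
  rintro a b ⟨h1, h2⟩
  refine ⟨h1, le_trans ?_ h2⟩
  by_cases ha : a ∈ D₀
  · simp [ha, hsub ha]
  · simp [ha]

lemma arrOf_anti (hsub : D₀ ⊆ D) : arrOf D₀ δ P ≤ arrOf D δ P := by
  cases hf : P.getLast? with
  | none => simp [arrOf, hf]
  | some f =>
    simp only [arrOf, hf]
    have : (if f ∈ D₀ then δ else 0) ≤ (if f ∈ D then δ else 0) := by
      by_cases h : f ∈ D₀
      · simp [h, hsub h]
      · simp [h]
    omega

lemma visitsAux_append (f : TimeArc V) (fs : List (TimeArc V)) :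
    ((f :: fs ++ [e]).head (by simp)).src :: ((f :: fs ++ [e]).map TimeArc.dst)
      = (f.src :: (f :: fs).map TimeArc.dst) ++ [e.dst] := by
  simp

lemma follows_append {Q : List V} (hF : Follows P Q) (hQ : Q ≠ [])
    (hsrc : e.src = Q.getLast hQ) : Follows (P ++ [e]) (Q ++ [e.dst]) := by
  cases P with
  | nil =>
    obtain ⟨v, rfl⟩ := hF
    simp only [List.getLast_singleton] at hsrc
    show visits [e] = [v, e.dst]
    simp [visits, hsrc]
  | cons f fs =>
    have hF' : (f.src :: (f :: fs).map TimeArc.dst) = Q := hF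
    show (f.src :: ((f :: (fs ++ [e])).map TimeArc.dst)) = Q ++ [e.dst]
    rw [← hF']
    simp

lemma follows_getLast {Q : List V} (hF : Follows P Q) {f : TimeArc V}
    (hf : P.getLast? = some f) : Q.getLast? = some f.dst := by
  cases P with
  | nil => simp at hf
  | cons g gs =>
    have hF' : (g.src :: (g :: gs).map TimeArc.dst) = Q := hF
    rw [← hF']
    have h1 : (List.map TimeArc.dst (g :: gs)).getLast? = some f.dst := by
      rw [List.getLast?_map, hf]; rfl
    simp only [List.map_cons] at h1 ⊢
    rw [List.getLast?_cons_cons]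
    exact h1

lemma follows_concat_inv {Q : List V} {w : V} (hF : Follows P (Q ++ [w])) (hQ : Q ≠ []) :
    ∃ P₀ e, P = P₀ ++ [e] ∧ Follows P₀ Q ∧ e.dst = w := by
  cases P with
  | nil =>
    obtain ⟨v, hv⟩ := hF
    exfalso
    have := congrArg List.length hv
    simp at this
    rcases Q with _ | ⟨a, _ | ⟨b, q⟩⟩ <;> simp_all
  | cons g gs =>
    have hF : (g.src :: (g :: gs).map TimeArc.dst) = Q ++ [w] := hF
    rcases List.eq_nil_or_concat (g :: gs) with h | ⟨P₀, e, h⟩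
    · simp at h
    · rw [List.concat_eq_append] at h
      refine ⟨P₀, e, h, ?_, ?_⟩
      · cases P₀ with
        | nil =>
          simp at h
          obtain ⟨rfl, rfl⟩ := h
          have : ([g.src] ++ [g.dst] : List V) = Q ++ [w] := by simpa using hF
          obtain ⟨hq, _⟩ := List.append_inj' this (by simp)
          exact ⟨g.src, hq.symm⟩
        | cons f fs =>
          rw [h] at hF
          have hgf : g = f := (List.cons.inj h).1
          have h2 : (f.src :: (f :: fs).map TimeArc.dst) ++ [e.dst] = Q ++ [w] := by
            rw [← hF, hgf]
            simp
          obtain ⟨hq, _⟩ := List.append_inj' h2 (by simp)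
          rw [Follows]
          exact hq
      · cases P₀ with
        | nil =>
          simp at h
          obtain ⟨rfl, rfl⟩ := h
          have : ([g.src] ++ [g.dst] : List V) = Q ++ [w] := by simpa using hF
          obtain ⟨_, hw⟩ := List.append_inj' this (by simp)
          simpa using hw
        | cons f fs =>
          rw [h] at hF
          have hgf : g = f := (List.cons.inj h).1
          have h2 : (f.src :: (f :: fs).map TimeArc.dst) ++ [e.dst] = Q ++ [w] := by
            rw [← hF, hgf]
            simp
          obtain ⟨_, hw⟩ := List.append_inj' h2 (by simp)
          simpa using hw


variable {E : Finset (TimeArc V)} {v w : V} {δ y : ℕ}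

lemma dpRev_single (u : V) (y : ℕ) : dpRev E δ [u] y = 0 := by
  rw [dpRev]

lemma le_dpRev {rest : List V} {y y' : ℕ} (h : y' ≤ y) :
    arrivalFn E δ v w (dpRev E δ (v :: rest) y') (y - y') ≤ dpRev E δ (w :: v :: rest) y := by
  rw [dpRev]
  exact Finset.le_sup (f := fun y' => arrivalFn E δ v w (dpRev E δ (v :: rest) y') (y - y'))
    (Finset.mem_range.2 (Nat.lt_succ_of_le h))

lemma dpRev_attained (rest : List V) (y : ℕ) :
    ∃ y' ≤ y, dpRev E δ (w :: v :: rest) y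
      = arrivalFn E δ v w (dpRev E δ (v :: rest) y') (y - y') := by
  obtain ⟨y', hy', heq⟩ := Finset.exists_mem_eq_sup (Finset.range (y + 1))
    (by simp : (Finset.range (y + 1)).Nonempty)
    (fun y' => arrivalFn E δ v w (dpRev E δ (v :: rest) y') (y - y'))
  exact ⟨y', Nat.lt_succ_iff.1 (Finset.mem_range.1 hy'), by rw [dpRev]; exact heq⟩

lemma dpRev_mono {rl : List V} {y y' : ℕ} (h : y ≤ y') :
    dpRev E δ rl y ≤ dpRev E δ rl y' := by
  match rl with
  | [] => rw [dpRev, dpRev]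
  | [u] => rw [dpRev, dpRev]
  | w :: v :: rest =>
    conv_lhs => rw [dpRev]
    refine Finset.sup_le fun b hb => ?_
    have hb' : b ≤ y := Nat.lt_succ_iff.1 (Finset.mem_range.1 hb)
    exact le_trans (arrivalFn_mono_y δ (Nat.sub_le_sub_right h b)) (le_dpRev (hb'.trans h))

lemma dpRev_top_cons {rl : List V} (hne : rl ≠ []) {y : ℕ} (h : dpRev E δ rl y = ⊤) (w : V) :
    dpRev E δ (w :: rl) y = ⊤ := by
  match rl, hne with
  | v :: rest, _ =>
    refine top_le_iff.1 ?_
    have h2 := le_dpRev (E := E) (δ := δ) (v := v) (w := w) (rest := rest) (le_refl y)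
    rw [h, arrivalFn_top] at h2
    exact h2


lemma getLast?_reverse_cons (v : V) (rest : List V) :
    (v :: rest).reverse.getLast? = some v := by
  rw [List.getLast?_reverse]
  rfl

lemma esrc_eq {P₀ : List (TimeArc V)} {e : TimeArc V} {v : V} {rest : List V}
    (hF₀ : Follows P₀ (v :: rest).reverse)
    (hsrc : ∀ f ∈ P₀.getLast?, e.src = f.dst)
    (hF : Follows (P₀ ++ [e]) ((v :: rest).reverse ++ [e.dst])) : e.src = v := by
  cases hlast : P₀.getLast? with
  | some f =>
    have h1 := follows_getLast hF₀ hlast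
    rw [getLast?_reverse_cons] at h1
    have h2 : f.dst = v := by injection h1 with h; exact h.symm
    rw [hsrc f (by rw [hlast]; rfl), h2]
  | none =>
    have hP₀ : P₀ = [] := List.getLast?_eq_none_iff.1 hlast
    subst hP₀
    obtain ⟨u, hu⟩ := hF₀
    have hvrest : v :: rest = [u] := by
      rw [← List.reverse_reverse (v :: rest), hu]
      rfl
    have hv : u = v := by injection hvrest with h1 _; exact h1.symm
    subst hv
    have hF' : visits [e] = [u] ++ [e.dst] := by rw [← hu]; exact hF
    have : ([e.src] ++ [e.dst] : List V) = [u] ++ [e.dst] := by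
      simpa [visits] using hF'
    have := (List.append_inj' this (by simp)).1
    injection this

lemma adversary (E : Finset (TimeArc V)) (δ : ℕ) :
    ∀ rl : List V, rl ≠ [] → ∀ y : ℕ,
    ∃ D : Finset (TimeArc V), D ⊆ E ∧ D.card ≤ y ∧
      ∀ P : List (TimeArc V), IsTDWalk E D δ P → Follows P rl.reverse →
        dpRev E δ rl y ≤ (arrOf D δ P : ℕ∞) := by
  intro rl
  induction rl with
  | nil => simp
  | cons w rl ih =>
    intro _ y
    cases rl with
    | nil =>
      refine ⟨∅, by simp, by simp, fun P _ _ => ?_⟩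
      rw [dpRev_single]
      exact zero_le
    | cons v rest =>
      obtain ⟨y', hy', heq⟩ := dpRev_attained (E := E) (δ := δ) (v := v) (w := w) rest y
      obtain ⟨D₀, hD₀E, hD₀c, hbound⟩ := ih (by simp) y'
      by_cases hτtop : dpRev E δ (v :: rest) y' = ⊤
      · refine ⟨D₀, hD₀E, le_trans hD₀c hy', fun P hW hF => ?_⟩
        rw [show (w :: v :: rest).reverse = (v :: rest).reverse ++ [w] from by simp] at hF
        obtain ⟨P₀, e, rfl, hF₀, hedst⟩ := follows_concat_inv hF (by simp)
        obtain ⟨hW₀, heE, htime, hsrc⟩ := isTDWalk_of_append hW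
        have hb := hbound P₀ hW₀ hF₀
        rw [hτtop] at hb
        exact absurd (top_le_iff.1 hb) (by simp)
      · obtain ⟨tp, htp⟩ := WithTop.ne_top_iff_exists.1 hτtop
        set z := y - y' with hz
        set D₁ : Finset (TimeArc V) := ((dList E v w tp).take z).toFinset with hD₁
        have hD₁win : ∀ e ∈ D₁, e ∈ dWin E v w tp := by
          intro e he
          rw [hD₁, List.mem_toFinset] at he
          exact mem_dList.1 (List.mem_of_mem_take he)
        refine ⟨D₀ ∪ D₁, ?_, ?_, ?_⟩
        · intro e he
          rcases Finset.mem_union.1 he with h | h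
          · exact hD₀E h
          · exact Finset.filter_subset _ _ (hD₁win e h)
        · refine le_trans (Finset.card_union_le _ _) ?_
          have hc1 : D₁.card ≤ z := by
            rw [hD₁]
            refine le_trans (List.toFinset_card_le _) ?_
            simpa using List.length_take_le z (dList E v w tp)
          omega
        · intro P hW hF
          rw [show (w :: v :: rest).reverse = (v :: rest).reverse ++ [w] from by simp] at hF
          obtain ⟨P₀, e, rfl, hF₀, hedst⟩ := follows_concat_inv hF (by simp)
          obtain ⟨hW₀, heE, htime, hsrc⟩ := isTDWalk_of_append hW
          have hb := hbound P₀ (isTDWalk_anti Finset.subset_union_left hW₀) hF₀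
          rw [← htp] at hb
          have hb' : tp ≤ arrOf D₀ δ P₀ := Nat.cast_le.1 hb
          have hbt : tp ≤ e.time :=
            le_trans (le_trans hb' (arrOf_anti Finset.subset_union_left)) htime
          have hesrc : e.src = v := esrc_eq hF₀ hsrc (hedst ▸ hF)
          have hewin : e ∈ dWin E v w tp :=
            Finset.mem_filter.2 ⟨heE, hesrc, hedst, hbt⟩
          rw [heq, ← htp, arrOf_append]
          by_cases heD : e ∈ D₀ ∪ D₁
          · rw [if_pos heD]
            have := arrivalFn_le_delay (E := E) (v := v) (w := w) δ (y - y') hewin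
            refine le_trans this ?_
            rw [arrKey]
          · rw [if_neg heD]
            have hent : e ∉ (dList E v w tp).take z := by
              intro hc
              exact heD (Finset.mem_union.2 (Or.inr (by rw [hD₁, List.mem_toFinset]; exact hc)))
            have := arrivalFn_le_undelayed (E := E) (v := v) (w := w) δ z hewin hent
            exact this


lemma arrKey_lt_of_arrivalFn_lt {t0 m t' : ℕ}
    (hhead : ∀ e ∈ dWin E v w t0, t' ≤ arrKey e + δ)
    (hlt : arrivalFn E δ v w (t0 : ℕ∞) m < ((t' : ℕ) : ℕ∞)) {j : ℕ}
    (hj : j < (dList E v w t0).length) (hjm : j ≤ m) :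
    arrKey ((dList E v w t0)[j]'hj) < t' := by
  rw [arrivalFn_coe] at hlt
  cases hM : List.map arrKey (dList E v w t0) with
  | nil =>
    exfalso
    rw [List.map_eq_nil_iff] at hM
    simp [hM] at hj
  | cons a l =>
    rw [hM] at hlt
    dsimp only at hlt
    have hlen0 : 0 < (dList E v w t0).length := lt_of_le_of_lt (Nat.zero_le j) hj
    have hlenM : (dList E v w t0).length = (a :: l).length := by rw [← hM]; simp
    have h0 : (List.map arrKey (dList E v w t0))[0]'(by simpa using hlen0) = a := by
      simp [hM]
    rw [List.getElem_map] at h0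
    have h0mem : (dList E v w t0)[0]'hlen0 ∈ dWin E v w t0 :=
      mem_dList.1 (List.getElem_mem hlen0)
    have hta : t' ≤ a + δ := h0 ▸ hhead _ h0mem
    by_cases hmlen : m < (a :: l).length
    · have hmL : m < (dList E v w t0).length := by omega
      rw [List.getElem?_eq_getElem hmlen] at hlt
      simp only [Option.getD_some] at hlt
      have hb : (a :: l)[m]'hmlen = arrKey ((dList E v w t0)[m]'hmL) := by
        simp only [← hM, List.getElem_map]
      rcases min_lt_iff.1 hlt with h | h
      · exfalso
        have : a + δ < t' := by exact_mod_cast h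
        omega
      · have hblt : (a :: l)[m]'hmlen < t' := by exact_mod_cast h
        rw [hb] at hblt
        exact lt_of_le_of_lt (sorted_arrKey_le hjm hmL) hblt
    · exfalso
      rw [List.getElem?_eq_none (by simpa using le_of_not_gt hmlen)] at hlt
      simp only [Option.getD_none, min_self] at hlt
      have : a + δ < t' := by exact_mod_cast hlt
      omega

lemma build_walk (E D : Finset (TimeArc V)) (δ : ℕ) (hDE : D ⊆ E) :
    ∀ rl : List V, rl ≠ [] →
    (∃ s ≤ D.card, dpRev E δ rl s = ⊤) ∨
    (∃ (P : List (TimeArc V)) (U : Finset (TimeArc V)),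
      IsTDWalk E D δ P ∧ Follows P rl.reverse ∧ U ⊆ D ∧
      (∀ e ∈ U, e.time < arrOf D δ P) ∧
      ((arrOf D δ P : ℕ) : ℕ∞) ≤ dpRev E δ rl U.card) := by
  intro rl
  induction rl with
  | nil => simp
  | cons w rl ih =>
    intro _
    cases rl with
    | nil =>
      right
      refine ⟨[], ∅, ⟨by simp, by simp [List.Chain']⟩, ⟨w, rfl⟩, Finset.empty_subset _, by simp, ?_⟩
      rw [dpRev_single]
      simp [arrOf]
    | cons v rest =>
      rcases ih (by simp) with ⟨s, hs, htop⟩ | ⟨P, U, hW, hF, hUD, hUt, hle⟩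
      · exact Or.inl ⟨s, hs, dpRev_top_cons (by simp) htop w⟩
      · by_cases hτtop : dpRev E δ (v :: rest) U.card = ⊤
        · exact Or.inl ⟨U.card, Finset.card_le_card hUD, dpRev_top_cons (by simp) hτtop w⟩
        obtain ⟨ap, hap⟩ := WithTop.ne_top_iff_exists.1 hτtop
        have hle' := hle
        rw [← hap] at hle'
        have hta : arrOf D δ P ≤ ap := WithTop.coe_le_coe.1 hle'
        by_cases hWe : dWin E v w ap = ∅
        · left
          refine ⟨U.card, Finset.card_le_card hUD, ?_⟩
          have h1 := le_dpRev (E := E) (δ := δ) (v := v) (w := w) (rest := rest)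
            (le_refl U.card)
          have h3 : arrivalFn E δ v w (dpRev E δ (v :: rest) U.card) (U.card - U.card) = ⊤ := by
            rw [← hap, Nat.sub_self]
            exact (arrivalFn_eq_top_iff (E := E) (v := v) (w := w) (t0 := ap) δ 0).2 hWe
          rw [h3] at h1
          exact top_le_iff.1 h1
        · obtain ⟨estar, hestar, hmin⟩ := Finset.exists_min_image (dWin E v w ap)
            (fun e => e.time + e.trav + if e ∈ D then δ else 0)
            (Finset.nonempty_of_ne_empty hWe)
          obtain ⟨hestarE, hestarsrc, hestardst, hestartime⟩ := Finset.mem_filter.1 hestar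
          set t' := estar.time + estar.trav + (if estar ∈ D then δ else 0) with ht'
          have hhead : ∀ e ∈ dWin E v w ap, t' ≤ arrKey e + δ := by
            intro e he
            refine le_trans (hmin e he) ?_
            rw [arrKey]
            by_cases h : e ∈ D <;> simp [h]
          have hex : ∃ n : ℕ, ((t' : ℕ) : ℕ∞) ≤ arrivalFn E δ v w (ap : ℕ∞) n :=
            ⟨(dList E v w ap).length, le_arrivalFn _ _ hhead
              (fun hz => absurd hz (lt_irrefl _))⟩
          classical
          set z := Nat.find hex with hzdef
          have hz_le : ((t' : ℕ) : ℕ∞) ≤ arrivalFn E δ v w (ap : ℕ∞) z := Nat.find_spec hex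
          have hz_len : z ≤ (dList E v w ap).length := Nat.find_min' hex (le_arrivalFn _ _ hhead
              (fun hz => absurd hz (lt_irrefl _)))
          have htake : ∀ e ∈ (dList E v w ap).take z, e ∈ D ∧ arrKey e < t' := by
            intro e he
            obtain ⟨j, hjlen, hje⟩ := List.mem_take_iff_getElem.1 he
            have hjz : j < z := lt_of_lt_of_le hjlen (min_le_left _ _)
            have hjlen' : j < (dList E v w ap).length :=
              lt_of_lt_of_le hjlen (min_le_right _ _)
            have hzpos : 0 < z := by omega
            have hnot := Nat.find_min hex (m := z - 1) (by omega)
            push_neg at hnot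
            have hkey : arrKey ((dList E v w ap)[j]'hjlen') < t' :=
              arrKey_lt_of_arrivalFn_lt hhead hnot hjlen' (by omega)
            rw [hje] at hkey
            refine ⟨?_, hkey⟩
            by_contra heD
            have hmem : e ∈ dWin E v w ap := mem_dList.1 (hje ▸ List.getElem_mem hjlen')
            have := hmin e hmem
            rw [if_neg heD] at this
            rw [arrKey] at hkey
            omega
          -- disjointness and new invariant
          set Sz : Finset (TimeArc V) := ((dList E v w ap).take z).toFinset with hSz
          have hSzD : Sz ⊆ D := fun e he => (htake e (List.mem_toFinset.1 he)).1
          have hSzcard : Sz.card = z := by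
            rw [hSz, List.toFinset_card_of_nodup (dList_nodup.sublist (List.take_sublist _ _))]
            simpa using hz_len
          have hUdisj : Disjoint U Sz := by
            rw [Finset.disjoint_left]
            intro e heU heSz
            have h1 := hUt e heU
            have h2 : e ∈ dWin E v w ap := mem_dList.1
              (List.mem_of_mem_take (List.mem_toFinset.1 heSz))
            have h3 : ap ≤ e.time := (Finset.mem_filter.1 h2).2.2.2
            omega
          have hgetLast : ∀ f ∈ P.getLast?, estar.src = f.dst := by
            intro f hf
            rw [Option.mem_def] at hf
            have h1 := follows_getLast hF hf
            rw [getLast?_reverse_cons] at h1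
            have h2 : f.dst = v := by injection h1 with h; exact h.symm
            rw [hestarsrc, h2]
          have hW' : IsTDWalk E D δ (P ++ [estar]) :=
            isTDWalk_append hW hestarE (fun f hf => hgetLast f hf)
              (le_trans hta hestartime)
          have hF' : Follows (P ++ [estar]) ((w :: v :: rest)).reverse := by
            have := follows_append (e := estar) hF (by simp)
              (by rw [List.getLast_reverse]; exact hestarsrc)
            rw [hestardst] at this
            simpa using this
          right
          refine ⟨P ++ [estar], U ∪ Sz, hW', hF', Finset.union_subset hUD hSzD, ?_, ?_⟩
          · intro e he
            rw [arrOf_append, ← ht']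
            have htt' : arrOf D δ P ≤ t' := by
              refine le_trans hta (le_trans hestartime ?_)
              rw [ht']
              omega
            rcases Finset.mem_union.1 he with h | h
            · exact lt_of_lt_of_le (hUt e h) htt'
            · have := (htake e (List.mem_toFinset.1 h)).2
              rw [arrKey] at this
              omega
          · rw [Finset.card_union_of_disjoint hUdisj, hSzcard, arrOf_append, ← ht']
            have hstep := le_dpRev (E := E) (δ := δ) (v := v) (w := w) (rest := rest)
              (show U.card ≤ U.card + z by omega)
            have harith : U.card + z - U.card = z := by omega
            rw [harith] at hstep
            rw [← hap] at hstep
            exact le_trans hz_le hstep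


end Helpers

theorem statement9 {V : Type} [DecidableEq V] (E : Finset (TimeArc V))
    (δ x : ℕ) (R : List V) (hR : R ≠ []) :
    TDRobust E δ x R ↔ dpRev E δ R.reverse x < ⊤ := by
  constructor
  · intro hrob
    by_contra hnotlt
    have htop : dpRev E δ R.reverse x = ⊤ := by
      rcases eq_top_or_lt_top (dpRev E δ R.reverse x) with h | h
      · exact h
      · exact absurd h hnotlt
    obtain ⟨D, hDE, hDc, hbound⟩ := adversary E δ R.reverse (by simpa using hR) x
    obtain ⟨P, hW, hF⟩ := hrob D hDE hDc
    have hb := hbound P hW (by rwa [List.reverse_reverse])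
    rw [htop] at hb
    exact absurd (top_le_iff.1 hb) (by simp)
  · intro hlt D hDE hDc
    rcases build_walk E D δ hDE R.reverse (by simpa using hR) with
      ⟨s, hs, htop⟩ | ⟨P, U, hW, hF, -, -, -⟩
    · exfalso
      have h2 : dpRev E δ R.reverse x = ⊤ :=
        top_le_iff.1 (htop ▸ dpRev_mono (le_trans hs hDc))
      rw [h2] at hlt
      exact lt_irrefl _ hlt
    · exact ⟨P, hW, by rwa [List.reverse_reverse] at hF⟩
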